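/- Let μ ∈ (0,1) and let p ∈ V_μ. Then W1(p, p*) ≤ 2 (G[p] − G[p*]), where p* is the shifted Bernoulli distribution with mean μ, which for μ ∈ (0,1) satisfies p*_0 = 1−μ, p*_1 = μ, and G[p*] = 1−μ. -/

import Mathlib

/-- Cumulative distribution function of a pmf on ℕ: `F n = ∑_{m ≤ n} p m`. -/
noncomputable def cdf (p : ℕ → ℝ) (n : ℕ) : ℝ := ∑ m ∈ Finset.range (n + 1), p m

/-- Wasserstein-1 distance between two pmfs on ℕ, `W1(p,q) = ∑_{n ≥ 0} |F_n - H_n|`. -/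
noncomputable def W1 (p q : ℕ → ℝ) : ℝ := ∑' n : ℕ, |cdf p n - cdf q n|

/-- Gini index of a pmf on ℕ with mean μ: `G[p] = (1/(2μ)) ∑_i ∑_j |i-j| p_i p_j`. -/
noncomputable def Gini (μ : ℝ) (p : ℕ → ℝ) : ℝ :=
  (1 / (2 * μ)) * ∑' i : ℕ, ∑' j : ℕ, |(i : ℝ) - (j : ℝ)| * p i * p j

/-- The shifted Bernoulli distribution with mean μ:
`p*_{⌊μ⌋} = 1 - μ + ⌊μ⌋`, `p*_{⌊μ⌋+1} = μ - ⌊μ⌋`, `p*_n = 0` otherwise. -/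
noncomputable def pstar (μ : ℝ) : ℕ → ℝ := fun n =>
  if n = ⌊μ⌋₊ then 1 - μ + (⌊μ⌋₊ : ℝ)
  else if n = ⌊μ⌋₊ + 1 then μ - (⌊μ⌋₊ : ℝ)
  else 0

/-- The Dirac distribution on ℕ concentrated at `k`. -/
noncomputable def dirac (k : ℕ) : ℕ → ℝ := fun n => if n = k then 1 else 0


open scoped ENNReal


lemma my_tsum_toReal {f : ℕ → ℝ} (hf : ∀ n, 0 ≤ f n) :
    ∑' n, f n = (∑' n, ENNReal.ofReal (f n)).toReal := by
  by_cases h : Summable f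
  · rw [← ENNReal.ofReal_tsum_of_nonneg hf h, ENNReal.toReal_ofReal (tsum_nonneg hf)]
  · rw [tsum_eq_zero_of_not_summable h]
    have h2 : ∑' n, ENNReal.ofReal (f n) = ⊤ := by
      by_contra hne
      exact h ((ENNReal.summable_toReal hne).congr fun n => ENNReal.toReal_ofReal (hf n))
    simp [h2]

lemma tail_ite (e : ℕ → ℝ≥0∞) (n : ℕ) :
    ∑' m, (if n < m then e m else 0) = ∑' m, e (m + (n + 1)) := by
  have h := Summable.sum_add_tsum_nat_add' (f := fun m => if n < m then e m else 0) (k := n + 1)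
    ENNReal.summable
  rw [← h]
  have h1 : ∑ i ∈ Finset.range (n + 1), (if n < i then e i else 0) = 0 := by
    apply Finset.sum_eq_zero
    intro i hi
    rw [Finset.mem_range] at hi
    simp [Nat.not_lt.mpr (Nat.lt_succ_iff.mp hi)]
  rw [h1, zero_add]
  exact tsum_congr fun (m : ℕ) => by simp [show n < m + (n + 1) by omega]

lemma sum_tail_eq_mean (e : ℕ → ℝ≥0∞) :
    ∑' n, ∑' m, (if n < m then e m else 0) = ∑' m : ℕ, (m : ℝ≥0∞) * e m := by
  rw [ENNReal.tsum_comm]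
  refine tsum_congr fun m => ?_
  rw [tsum_eq_sum (s := Finset.range m) (fun b hb => by
    rw [Finset.mem_range] at hb
    simp [Nat.not_lt.mpr (Nat.not_lt.mp hb)])]
  rw [Finset.sum_congr rfl (fun n hn => if_pos (Finset.mem_range.mp hn)), Finset.sum_const,
    Finset.card_range, nsmul_eq_mul]

lemma tsum_ite_count (a b : ℕ) (x : ℝ≥0∞) :
    ∑' n, (if a ≤ n ∧ n < b then x else 0) = ((b - a : ℕ) : ℝ≥0∞) * x := by
  rw [tsum_eq_sum (s := Finset.Ico a b) (fun n hn => by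
    rw [Finset.mem_Ico] at hn; exact if_neg hn)]
  rw [Finset.sum_congr rfl (fun n hn => if_pos (Finset.mem_Ico.mp hn)), Finset.sum_const,
    Nat.card_Ico, nsmul_eq_mul]

lemma ofReal_abs_nat (i j : ℕ) :
    ENNReal.ofReal |(i : ℝ) - (j : ℝ)| = ((i - j : ℕ) : ℝ≥0∞) + ((j - i : ℕ) : ℝ≥0∞) := by
  rcases le_total i j with h | h
  · rw [abs_of_nonpos (by simpa using (Nat.cast_le (α := ℝ)).mpr h), Nat.sub_eq_zero_of_le h]
    rw [← ENNReal.ofReal_natCast (j - i)]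
    simp [Nat.cast_sub h]
  · rw [abs_of_nonneg (by simpa using (Nat.cast_le (α := ℝ)).mpr h), Nat.sub_eq_zero_of_le h]
    rw [← ENNReal.ofReal_natCast (i - j)]
    simp [Nat.cast_sub h]

lemma abs_eq_tsum (i j : ℕ) :
    ENNReal.ofReal |(i : ℝ) - (j : ℝ)|
      = ∑' n, ((if j ≤ n ∧ n < i then (1 : ℝ≥0∞) else 0) + (if i ≤ n ∧ n < j then 1 else 0)) := by
  rw [Summable.tsum_add ENNReal.summable ENNReal.summable, tsum_ite_count, tsum_ite_count,
    ofReal_abs_nat, mul_one, mul_one]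

lemma gini_key (n i j : ℕ) (e : ℕ → ℝ≥0∞) :
    ((if j ≤ n ∧ n < i then (1 : ℝ≥0∞) else 0) + (if i ≤ n ∧ n < j then 1 else 0)) * e i * e j
      = (if n < i then e i else 0) * (if j ≤ n then e j else 0)
        + (if i ≤ n then e i else 0) * (if n < j then e j else 0) := by
  by_cases h1 : n < i <;> by_cases h2 : n < j <;>
    simp [h1, h2, ← Nat.not_lt, add_mul, mul_comm]

lemma gini_core (e : ℕ → ℝ≥0∞) :
    ∑' (i : ℕ) (j : ℕ), ENNReal.ofReal |(i : ℝ) - (j : ℝ)| * e i * e j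
      = 2 * ∑' n, (∑' m, e (m + (n + 1))) * (∑ m ∈ Finset.range (n + 1), e m) := by
  set c : ℕ → ℕ → ℕ → ℝ≥0∞ := fun n i j =>
    ((if j ≤ n ∧ n < i then (1 : ℝ≥0∞) else 0) + (if i ≤ n ∧ n < j then 1 else 0)) * e i * e j
    with hc
  have step1 : ∀ i j : ℕ, ENNReal.ofReal |(i : ℝ) - (j : ℝ)| * e i * e j = ∑' n, c n i j := by
    intro i j
    rw [abs_eq_tsum, ENNReal.tsum_mul_right, ENNReal.tsum_mul_right]
  calc ∑' (i : ℕ) (j : ℕ), ENNReal.ofReal |(i : ℝ) - (j : ℝ)| * e i * e j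
      = ∑' (i : ℕ) (j : ℕ) (n : ℕ), c n i j :=
        tsum_congr fun i => tsum_congr fun j => step1 i j
    _ = ∑' (i : ℕ) (n : ℕ) (j : ℕ), c n i j := tsum_congr fun i => ENNReal.tsum_comm
    _ = ∑' (n : ℕ) (i : ℕ) (j : ℕ), c n i j := ENNReal.tsum_comm
    _ = 2 * ∑' n, (∑' m, e (m + (n + 1))) * (∑ m ∈ Finset.range (n + 1), e m) := by
        rw [← ENNReal.tsum_mul_left]
        refine tsum_congr fun n => ?_
        have hstep : ∀ i : ℕ, ∑' j, c n i j
            = (if n < i then e i else 0) * (∑' j, (if j ≤ n then e j else 0))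
              + (if i ≤ n then e i else 0) * (∑' j, (if n < j then e j else 0)) := by
          intro i
          rw [← ENNReal.tsum_mul_left, ← ENNReal.tsum_mul_left,
            ← Summable.tsum_add ENNReal.summable ENNReal.summable]
          exact tsum_congr fun j => gini_key n i j e
        rw [tsum_congr hstep, Summable.tsum_add ENNReal.summable ENNReal.summable,
          ENNReal.tsum_mul_right, ENNReal.tsum_mul_right]
        have hle : (∑' j, (if j ≤ n then e j else 0)) = ∑ m ∈ Finset.range (n + 1), e m := by
          rw [tsum_eq_sum (s := Finset.range (n + 1)) (fun b hb => by
            rw [Finset.mem_range] at hb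
            exact if_neg (by omega))]
          exact Finset.sum_congr rfl fun m hm => if_pos (by
            rw [Finset.mem_range] at hm; omega)
        have hgt : (∑' j, (if n < j then e j else 0)) = ∑' m, e (m + (n + 1)) := tail_ite e n
        rw [hle, hgt, two_mul]
        ring

theorem stmt_10 (μ : ℝ) (hμ0 : 0 < μ) (hμ1 : μ < 1) (p : ℕ → ℝ)
    (hpos : ∀ n, 0 ≤ p n) (hsum : HasSum p 1)
    (hmean : HasSum (fun n : ℕ => (n : ℝ) * p n) μ) :
    W1 p (pstar μ) ≤ 2 * (Gini μ p - Gini μ (pstar μ)) := by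
  classical
  have hsummable : Summable p := hsum.summable
  have htsum : ∑' n, p n = 1 := hsum.tsum_eq
  set F : ℕ → ℝ := cdf p with hF
  have hFle : ∀ n, F n ≤ 1 := fun n => by
    have := Summable.sum_le_tsum (Finset.range (n + 1)) (fun i _ => hpos i) hsummable
    rw [htsum] at this
    exact this
  have hFnonneg : ∀ n, 0 ≤ F n := fun n => Finset.sum_nonneg fun i _ => hpos i
  have hFmono : ∀ n, F 0 ≤ F n := fun n => by
    apply Finset.sum_le_sum_of_subset_of_nonneg
    · intro x hx; rw [Finset.mem_range] at *; omega
    · intro i _ _; exact hpos i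
  set a : ℕ → ℝ := fun n => 1 - F n with ha
  have hanonneg : ∀ n, 0 ≤ a n := fun n => by
    have := hFle n; simp only [ha]; linarith
  have hamono : ∀ n, a n ≤ a 0 := fun n => by
    have := hFmono n; simp only [ha]; linarith
  have htail : ∀ n, a n = ∑' m, p (m + (n + 1)) := fun n => by
    have h := Summable.sum_add_tsum_nat_add (n + 1) hsummable
    rw [htsum] at h
    simp only [ha, hF, cdf]
    linarith
  set e : ℕ → ℝ≥0∞ := fun n => ENNReal.ofReal (p n) with he
  have hTofReal : ∀ n, (∑' m, e (m + (n + 1))) = ENNReal.ofReal (a n) := fun n => by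
    rw [htail n, ENNReal.ofReal_tsum_of_nonneg (fun m => hpos _)
      ((summable_nat_add_iff (n + 1)).mpr hsummable)]
  have hPhiofReal : ∀ n, (∑ m ∈ Finset.range (n + 1), e m) = ENNReal.ofReal (F n) := fun n => by
    rw [hF, cdf, ENNReal.ofReal_sum_of_nonneg (fun i _ => hpos i)]
  -- mean identity
  have hmean' : ∑' n, ENNReal.ofReal (a n) = ENNReal.ofReal μ := by
    calc ∑' n, ENNReal.ofReal (a n)
        = ∑' n, ∑' m, (if n < m then e m else 0) := by
          refine tsum_congr fun n => ?_
          rw [tail_ite, hTofReal]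
      _ = ∑' m : ℕ, (m : ℝ≥0∞) * e m := sum_tail_eq_mean e
      _ = ENNReal.ofReal μ := by
          rw [← hmean.tsum_eq, ENNReal.ofReal_tsum_of_nonneg
            (fun n => mul_nonneg (Nat.cast_nonneg n) (hpos n)) hmean.summable]
          exact tsum_congr fun n => by
            rw [ENNReal.ofReal_mul (Nat.cast_nonneg n), ENNReal.ofReal_natCast]
  have hsuma : Summable a := by
    have h := ENNReal.summable_toReal (f := fun n => ENNReal.ofReal (a n))
      (by rw [hmean']; exact ENNReal.ofReal_ne_top)
    exact h.congr fun n => ENNReal.toReal_ofReal (hanonneg n)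
  have htsuma : ∑' n, a n = μ := by
    rw [my_tsum_toReal hanonneg, hmean', ENNReal.toReal_ofReal hμ0.le]
  have ha0le : a 0 ≤ μ := by
    rw [← htsuma]
    exact Summable.le_tsum hsuma 0 fun i _ => hanonneg i
  -- Gini double sum for p
  have hSfin : ∑' n, ENNReal.ofReal (a n) * ENNReal.ofReal (F n) ≠ ⊤ := by
    have hle : ∀ n, ENNReal.ofReal (a n) * ENNReal.ofReal (F n) ≤ ENNReal.ofReal (a n) := by
      intro n
      calc ENNReal.ofReal (a n) * ENNReal.ofReal (F n)
          ≤ ENNReal.ofReal (a n) * 1 := by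
            gcongr
            rw [← ENNReal.ofReal_one]
            exact ENNReal.ofReal_le_ofReal (hFle n)
        _ = ENNReal.ofReal (a n) := mul_one _
    refine ne_top_of_le_ne_top ?_ (Summable.tsum_le_tsum hle ENNReal.summable ENNReal.summable)
    rw [hmean']
    exact ENNReal.ofReal_ne_top
  have hSaF_sum : Summable (fun n => a n * F n) := by
    have h := ENNReal.summable_toReal hSfin
    refine h.congr fun n => ?_
    rw [← ENNReal.ofReal_mul (hanonneg n),
      ENNReal.toReal_ofReal (mul_nonneg (hanonneg n) (hFnonneg n))]
  set S : ℝ := ∑' n, a n * F n with hSdef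
  have hS : S = (∑' n, ENNReal.ofReal (a n) * ENNReal.ofReal (F n)).toReal := by
    rw [hSdef, my_tsum_toReal (fun n => mul_nonneg (hanonneg n) (hFnonneg n))]
    congr 1
    exact tsum_congr fun n => ENNReal.ofReal_mul (hanonneg n)
  have hcore : ∑' (i : ℕ) (j : ℕ), ENNReal.ofReal |(i : ℝ) - (j : ℝ)| * e i * e j
      = 2 * ∑' n, ENNReal.ofReal (a n) * ENNReal.ofReal (F n) := by
    rw [gini_core e]
    congr 1
    exact tsum_congr fun n => by rw [hTofReal, hPhiofReal]
  have hcorefin : ∑' (i : ℕ) (j : ℕ), ENNReal.ofReal |(i : ℝ) - (j : ℝ)| * e i * e j ≠ ⊤ := by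
    rw [hcore]
    exact ENNReal.mul_ne_top (by norm_num) hSfin
  have hterm : ∀ i j : ℕ, ENNReal.ofReal (|(i : ℝ) - (j : ℝ)| * p i * p j)
      = ENNReal.ofReal |(i : ℝ) - (j : ℝ)| * e i * e j := fun i j => by
    rw [ENNReal.ofReal_mul (mul_nonneg (abs_nonneg _) (hpos i)),
      ENNReal.ofReal_mul (abs_nonneg _)]
  have hinner_eq : ∀ i : ℕ, ∑' j : ℕ, |(i : ℝ) - (j : ℝ)| * p i * p j
      = (∑' j : ℕ, ENNReal.ofReal |(i : ℝ) - (j : ℝ)| * e i * e j).toReal := fun i => by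
    rw [my_tsum_toReal (fun j => mul_nonneg (mul_nonneg (abs_nonneg _) (hpos i)) (hpos j))]
    congr 1
    exact tsum_congr fun j => hterm i j
  have hinner_fin : ∀ i : ℕ,
      (∑' j : ℕ, ENNReal.ofReal |(i : ℝ) - (j : ℝ)| * e i * e j) ≠ ⊤ := fun i =>
    ne_top_of_le_ne_top hcorefin (ENNReal.le_tsum i)
  have hdouble : ∑' (i : ℕ) (j : ℕ), |(i : ℝ) - (j : ℝ)| * p i * p j = 2 * S := by
    calc ∑' (i : ℕ) (j : ℕ), |(i : ℝ) - (j : ℝ)| * p i * p j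
        = ∑' i : ℕ, (∑' j : ℕ, ENNReal.ofReal |(i : ℝ) - (j : ℝ)| * e i * e j).toReal :=
          tsum_congr hinner_eq
      _ = (∑' (i : ℕ) (j : ℕ), ENNReal.ofReal |(i : ℝ) - (j : ℝ)| * e i * e j).toReal :=
          (ENNReal.tsum_toReal_eq hinner_fin).symm
      _ = 2 * S := by
          rw [hcore, ENNReal.toReal_mul, hS]
          norm_num
  have hGp : Gini μ p = (1 / (2 * μ)) * (2 * S) := by
    rw [Gini, hdouble]
  -- pstar facts
  have hfloor : ⌊μ⌋₊ = 0 := Nat.floor_eq_zero.mpr hμ1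
  have hps0 : pstar μ 0 = 1 - μ := by simp [pstar, hfloor]
  have hps1 : pstar μ 1 = μ := by simp [pstar, hfloor]
  have hpsn : ∀ n, 2 ≤ n → pstar μ n = 0 := fun n hn => by
    rw [pstar, if_neg (by omega), if_neg (by omega)]
  have hcdfps : ∀ n, 1 ≤ n → cdf (pstar μ) n = 1 := by
    intro n hn
    rw [cdf, ← Finset.sum_subset (s₁ := Finset.range 2)
      (by intro x hx; rw [Finset.mem_range] at *; omega)
      (fun x hx hx2 => hpsn x (by rw [Finset.mem_range] at hx2; omega))]
    rw [Finset.sum_range_succ, Finset.sum_range_one, hps0, hps1]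
    ring
  have hcdfps0 : cdf (pstar μ) 0 = 1 - μ := by
    rw [cdf, Finset.sum_range_one, hps0]
  -- Gini of pstar
  have hGps : Gini μ (pstar μ) = 1 - μ := by
    rw [Gini]
    have hinner : ∀ i : ℕ, ∑' j : ℕ, |(i : ℝ) - (j : ℝ)| * pstar μ i * pstar μ j
        = |(i : ℝ) - 0| * pstar μ i * (1 - μ) + |(i : ℝ) - 1| * pstar μ i * μ := by
      intro i
      rw [tsum_eq_sum (s := {0, 1}) (fun b hb => by
        simp only [Finset.mem_insert, Finset.mem_singleton] at hb
        push_neg at hb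
        rw [hpsn b (by omega), mul_zero])]
      rw [Finset.sum_pair (by norm_num : (0 : ℕ) ≠ 1), hps0, hps1]
      norm_num
    rw [tsum_congr hinner, tsum_eq_sum (s := {0, 1}) (fun b hb => by
      simp only [Finset.mem_insert, Finset.mem_singleton] at hb
      push_neg at hb
      rw [hpsn b (by omega)]
      ring)]
    rw [Finset.sum_pair (by norm_num : (0 : ℕ) ≠ 1), hps0, hps1]
    simp only [Nat.cast_zero, Nat.cast_one]
    rw [show |(0 : ℝ) - 0| = 0 by simp, show |(0 : ℝ) - 1| = 1 by rw [abs_of_nonpos] <;> norm_num,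
      show |(1 : ℝ) - 0| = 1 by rw [abs_of_nonneg] <;> norm_num, show |(1 : ℝ) - 1| = 0 by simp]
    field_simp
    ring
  -- W1 computation
  have hshift : ∀ n : ℕ, |cdf p (n + 1) - cdf (pstar μ) (n + 1)| = a (n + 1) := fun n => by
    rw [hcdfps (n + 1) (by omega), abs_of_nonpos (by have := hFle (n + 1); simp only [hF] at this ⊢; linarith)]
    simp only [ha, hF]
    ring
  have hW : W1 p (pstar μ) = (μ - a 0) + (μ - a 0) := by
    rw [W1]
    have hsummw : Summable (fun n => |cdf p n - cdf (pstar μ) n|) := by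
      rw [← summable_nat_add_iff 1]
      exact (((summable_nat_add_iff 1).mpr hsuma).congr (fun n => (hshift n).symm))
    rw [Summable.tsum_eq_zero_add hsummw]
    have h0 : |cdf p 0 - cdf (pstar μ) 0| = μ - a 0 := by
      rw [hcdfps0, abs_of_nonneg (by simp only [ha, hF] at ha0le ⊢; linarith)]
      simp only [ha, hF]
      ring
    have h1 : ∑' n : ℕ, |cdf p (n + 1) - cdf (pstar μ) (n + 1)| = μ - a 0 := by
      rw [tsum_congr hshift]
      have h2 := Summable.tsum_eq_zero_add hsuma
      rw [htsuma] at h2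
      linarith
    rw [h0, h1]
  -- final inequality
  have hsuma2 : Summable (fun n => a n * a n) := by
    have heq : (fun n => a n * a n) = fun n => a n - a n * F n := funext fun n => by
      simp only [ha]; ring
    rw [heq]
    exact hsuma.sub hSaF_sum
  have hsq : ∑' n, a n * a n = μ - S := by
    have heq : (fun n => a n * a n) = fun n => a n - a n * F n := funext fun n => by
      simp only [ha]; ring
    rw [heq, Summable.tsum_sub hsuma hSaF_sum, htsuma, hSdef]
  have hsqle : ∑' n, a n * a n ≤ a 0 * μ := by
    calc ∑' n, a n * a n ≤ ∑' n, a 0 * a n :=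
          Summable.tsum_le_tsum (fun n => mul_le_mul_of_nonneg_right (hamono n) (hanonneg n))
            hsuma2 (hsuma.mul_left _)
      _ = a 0 * μ := by rw [tsum_mul_left, htsuma]
  have hSlow : μ - a 0 * μ ≤ S := by linarith [hsq ▸ hsqle]
  rw [hW, hGp, hGps]
  have hid : (1 / (2 * μ)) * (2 * S) = S / μ := by
    field_simp
  rw [hid]
  have h3 : 1 - a 0 ≤ S / μ := by
    rw [le_div_iff₀ hμ0]
    nlinarith
  linarith
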